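/- Let r ≥ 1, let a_0,…,a_{r−1} be nonzero, pairwise distinct complex numbers, and let n = (n_0,…,n_{r−1}) ∈ ℕ^r. Then for every ℓ ∈ {0,…,r−1} and every j with 0 ≤ j ≤ n_ℓ−1, the series Σ_{k=0}^∞ C^a_n(k)·(−k)_j·a_ℓ^k/k! converges absolutely and its sum equals 0. -/

import Mathlib

/-- The rising Pochhammer symbol `(y)_m = y(y+1)⋯(y+m-1)`. -/
noncomputable def poch (y : ℂ) (m : ℕ) : ℂ := ∏ i ∈ Finset.range m, (y + i)

/-- The explicit type II Charlier--Angelesco polynomial (as a function of `x = z^r`). -/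
noncomputable def charlierAngelesco (r : ℕ) (a : Fin r → ℂ) (n : Fin r → ℕ) (x : ℂ) : ℂ :=
  ∑ k ∈ Fintype.piFinset (fun i : Fin r => Finset.range (n i + 1)),
    (∏ ℓ : Fin r, ((n ℓ).choose (k ℓ) : ℂ) * (-(a ℓ)) ^ (n ℓ - k ℓ)) *
      (-1) ^ (∑ i, k i) * poch (-x) (∑ i, k i)


section Helpers
open Finset Polynomial

private lemma poch_neg_natCast (k m : ℕ) :
    poch (-(k : ℂ)) m = (-1) ^ m * (k.descFactorial m : ℂ) := by
  induction m with
  | zero => simp [poch]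
  | succ m ih =>
    rw [poch, Finset.prod_range_succ, ← poch, ih, Nat.descFactorial_succ]
    rcases lt_trichotomy m k with h | h | h
    · push_cast [Nat.cast_sub h.le]
      ring
    · subst h
      push_cast [Nat.sub_self]
      ring
    · rw [Nat.descFactorial_eq_zero_iff_lt.mpr h]
      push_cast
      ring

private lemma descFactorial_add_vandermonde (j t m : ℕ) :
    (j + t).descFactorial m =
      ∑ i ∈ range (m + 1), m.choose i * (j.descFactorial i * t.descFactorial (m - i)) := by
  rw [Nat.descFactorial_eq_factorial_mul_choose, Nat.add_choose_eq,
    Finset.Nat.sum_antidiagonal_eq_sum_range_succ_mk, Finset.mul_sum]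
  refine sum_congr rfl fun i hi => ?_
  have hle : i ≤ m := Nat.lt_succ_iff.mp (mem_range.mp hi)
  rw [Nat.descFactorial_eq_factorial_mul_choose j, Nat.descFactorial_eq_factorial_mul_choose t,
    ← Nat.choose_mul_factorial_mul_factorial hle]
  ring

private lemma summable_exp_series (a : ℂ) :
    Summable (fun s : ℕ => a ^ s / (s.factorial : ℂ)) := by
  refine Summable.of_norm ?_
  simpa [norm_div, norm_pow] using Real.summable_pow_div_factorial ‖a‖

private lemma desc_shift (a : ℂ) (d s : ℕ) :
    (((d + s).descFactorial d : ℕ) : ℂ) * a ^ (d + s) / ((d + s).factorial : ℂ) =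
      a ^ d * (a ^ s / (s.factorial : ℂ)) := by
  have h : s.factorial * (d + s).descFactorial d = (d + s).factorial := by
    have := Nat.factorial_mul_descFactorial (n := d + s) (k := d) (Nat.le_add_right d s)
    simpa using this
  have hs : ((s.factorial : ℕ) : ℂ) ≠ 0 := Nat.cast_ne_zero.mpr s.factorial_ne_zero
  have hds : (((d + s).factorial : ℕ) : ℂ) ≠ 0 := Nat.cast_ne_zero.mpr (d + s).factorial_ne_zero
  field_simp
  rw [pow_add, ← h]
  push_cast
  ring

private lemma summable_v_norm (a : ℂ) (d : ℕ) :
    Summable (fun x : ℕ => ‖(x.descFactorial d : ℂ) * a ^ x / (x.factorial : ℂ)‖) := by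
  have hinj : Function.Injective (fun s : ℕ => d + s) := fun x y h => by simpa using h
  have hzero : ∀ x ∉ Set.range (fun s : ℕ => d + s),
      ‖(x.descFactorial d : ℂ) * a ^ x / (x.factorial : ℂ)‖ = 0 := by
    intro x hx
    have hxd : x < d := by
      by_contra h
      exact hx ⟨x - d, by simp; omega⟩
    rw [Nat.descFactorial_eq_zero_iff_lt.mpr hxd]
    simp
  rw [← hinj.summable_iff hzero]
  have hcomp : (fun x : ℕ => ‖(x.descFactorial d : ℂ) * a ^ x / (x.factorial : ℂ)‖)
      ∘ (fun s : ℕ => d + s)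
      = fun s : ℕ => ‖a ^ d * (a ^ s / (s.factorial : ℂ))‖ := by
    funext s
    rw [Function.comp_apply, desc_shift]
  rw [hcomp]
  exact ((summable_exp_series a).mul_left (a ^ d)).norm

private lemma summable_v (a : ℂ) (d : ℕ) :
    Summable (fun x : ℕ => (x.descFactorial d : ℂ) * a ^ x / (x.factorial : ℂ)) :=
  (summable_v_norm a d).of_norm

private lemma tsum_v (a : ℂ) (d : ℕ) :
    ∑' x : ℕ, (x.descFactorial d : ℂ) * a ^ x / (x.factorial : ℂ)
      = a ^ d * ∑' s : ℕ, a ^ s / (s.factorial : ℂ) := by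
  have hinj : Function.Injective (fun s : ℕ => d + s) := fun x y h => by simpa using h
  have hsupp : Function.support
      (fun x : ℕ => (x.descFactorial d : ℂ) * a ^ x / (x.factorial : ℂ))
      ⊆ Set.range (fun s : ℕ => d + s) := by
    intro x hx
    by_contra h
    have hxd : x < d := by
      by_contra h2
      exact h ⟨x - d, by simp; omega⟩
    apply hx
    show (x.descFactorial d : ℂ) * a ^ x / (x.factorial : ℂ) = 0
    rw [Nat.descFactorial_eq_zero_iff_lt.mpr hxd]
    simp
  rw [← hinj.tsum_eq hsupp, tsum_congr (fun s => desc_shift a d s), tsum_mul_left]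

private lemma shift_expand (a : ℂ) (j m t : ℕ) :
    ((j + t).descFactorial m : ℂ) * ((j + t).descFactorial j : ℂ) * a ^ (j + t)
        / ((j + t).factorial : ℂ)
      = ∑ i ∈ range (m + 1),
          (m.choose i : ℂ) * (j.descFactorial i : ℂ) * a ^ j *
            ((t.descFactorial (m - i) : ℂ) * a ^ t / (t.factorial : ℂ)) := by
  rw [mul_assoc, mul_div_assoc, desc_shift a j t, descFactorial_add_vandermonde j t m]
  push_cast
  rw [Finset.sum_mul]
  exact sum_congr rfl fun i _ => by ring

private lemma summable_T_norm (a : ℂ) (j m : ℕ) :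
    Summable (fun x : ℕ =>
      ‖(x.descFactorial m : ℂ) * (x.descFactorial j : ℂ) * a ^ x / (x.factorial : ℂ)‖) := by
  have hinj : Function.Injective (fun s : ℕ => j + s) := fun x y h => by simpa using h
  have hzero : ∀ x ∉ Set.range (fun s : ℕ => j + s),
      ‖(x.descFactorial m : ℂ) * (x.descFactorial j : ℂ) * a ^ x / (x.factorial : ℂ)‖ = 0 := by
    intro x hx
    have hxd : x < j := by
      by_contra h
      exact hx ⟨x - j, by simp; omega⟩
    rw [Nat.descFactorial_eq_zero_iff_lt.mpr hxd]
    simp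
  rw [← hinj.summable_iff hzero]
  have hcomp : (fun x : ℕ =>
        ‖(x.descFactorial m : ℂ) * (x.descFactorial j : ℂ) * a ^ x / (x.factorial : ℂ)‖)
      ∘ (fun s : ℕ => j + s)
      = fun t : ℕ => ‖∑ i ∈ range (m + 1),
          (m.choose i : ℂ) * (j.descFactorial i : ℂ) * a ^ j *
            ((t.descFactorial (m - i) : ℂ) * a ^ t / (t.factorial : ℂ))‖ := by
    funext t
    rw [Function.comp_apply, shift_expand]
  rw [hcomp]
  refine Summable.of_nonneg_of_le (fun t => norm_nonneg _) (fun t => norm_sum_le _ _) ?_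
  refine summable_sum fun i _ => ?_
  have h := (summable_v_norm a (m - i)).mul_left
    ‖(m.choose i : ℂ) * (j.descFactorial i : ℂ) * a ^ j‖
  refine h.congr fun t => ?_
  exact (norm_mul _ _).symm

private lemma summable_T (a : ℂ) (j m : ℕ) :
    Summable (fun x : ℕ =>
      (x.descFactorial m : ℂ) * (x.descFactorial j : ℂ) * a ^ x / (x.factorial : ℂ)) :=
  (summable_T_norm a j m).of_norm

private lemma tsum_T (a : ℂ) (j m : ℕ) :
    ∑' x : ℕ, (x.descFactorial m : ℂ) * (x.descFactorial j : ℂ) * a ^ x / (x.factorial : ℂ)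
      = ∑ i ∈ range (m + 1),
          (m.choose i : ℂ) * (j.descFactorial i : ℂ) * a ^ j *
            (a ^ (m - i) * ∑' s : ℕ, a ^ s / (s.factorial : ℂ)) := by
  have hinj : Function.Injective (fun s : ℕ => j + s) := fun x y h => by simpa using h
  have hsupp : Function.support (fun x : ℕ =>
      (x.descFactorial m : ℂ) * (x.descFactorial j : ℂ) * a ^ x / (x.factorial : ℂ))
      ⊆ Set.range (fun s : ℕ => j + s) := by
    intro x hx
    by_contra h
    have hxd : x < j := by
      by_contra h2
      exact h ⟨x - j, by simp; omega⟩
    apply hx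
    show (x.descFactorial m : ℂ) * (x.descFactorial j : ℂ) * a ^ x / (x.factorial : ℂ) = 0
    rw [Nat.descFactorial_eq_zero_iff_lt.mpr hxd]
    simp
  rw [← hinj.tsum_eq hsupp, tsum_congr (fun t => shift_expand a j m t),
    Summable.tsum_finsetSum (fun i _ => (summable_v a (m - i)).mul_left _)]
  refine sum_congr rfl fun i _ => ?_
  rw [tsum_mul_left, tsum_v]

private lemma hasse_sum_zero (r : ℕ) (a : Fin r → ℂ) (n : Fin r → ℕ) (ℓ : Fin r) (i : ℕ)
    (hi : i < n ℓ) :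
    ∑ K ∈ Fintype.piFinset (fun t : Fin r => Finset.range (n t + 1)),
      (∏ t, ((n t).choose (K t) : ℂ) * (-(a t)) ^ (n t - K t)) *
        (((∑ t, K t).choose i : ℂ) * a ℓ ^ ((∑ t, K t) - i)) = 0 := by
  set P : ℂ[X] := ∏ t, (X - C (a t)) ^ (n t) with hP
  have hexp : P = ∑ K ∈ Fintype.piFinset (fun t : Fin r => Finset.range (n t + 1)),
      C (∏ t, ((n t).choose (K t) : ℂ) * (-(a t)) ^ (n t - K t)) * X ^ (∑ t, K t) := by
    have hfac : ∀ t : Fin r, (X - C (a t)) ^ (n t)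
        = ∑ k ∈ range (n t + 1), C (((n t).choose k : ℂ) * (-(a t)) ^ (n t - k)) * X ^ k := by
      intro t
      rw [sub_eq_add_neg, ← C_neg, add_pow]
      refine sum_congr rfl fun k _ => ?_
      rw [← C_pow, ← C_eq_natCast, mul_assoc, ← C_mul, mul_comm (X ^ k),
        mul_comm ((-(a t)) ^ (n t - k))]
    rw [hP, Finset.prod_congr rfl fun t _ => hfac t, Finset.prod_univ_sum]
    refine sum_congr rfl fun K _ => ?_
    rw [Finset.prod_mul_distrib, ← map_prod, Finset.prod_pow_eq_pow_sum]
  have heval : (Polynomial.hasseDeriv i P).eval (a ℓ)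
      = ∑ K ∈ Fintype.piFinset (fun t : Fin r => Finset.range (n t + 1)),
          (∏ t, ((n t).choose (K t) : ℂ) * (-(a t)) ^ (n t - K t)) *
            (((∑ t, K t).choose i : ℂ) * a ℓ ^ ((∑ t, K t) - i)) := by
    rw [hexp, map_sum, eval_finset_sum]
    refine sum_congr rfl fun K _ => ?_
    rw [C_mul_X_pow_eq_monomial, hasseDeriv_monomial, eval_monomial]
    ring
  have hzero : (Polynomial.hasseDeriv i P).eval (a ℓ) = 0 := by
    rw [← Polynomial.taylor_coeff]
    obtain ⟨Q, hQ⟩ : (X - C (a ℓ)) ^ (n ℓ) ∣ P :=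
      Finset.dvd_prod_of_mem (fun t => (X - C (a t)) ^ (n t)) (Finset.mem_univ ℓ)
    have htay : Polynomial.taylor (a ℓ) P = X ^ (n ℓ) * Polynomial.taylor (a ℓ) Q := by
      rw [hQ, Polynomial.taylor_mul]
      congr 1
      rw [show Polynomial.taylor (a ℓ) ((X - C (a ℓ)) ^ n ℓ)
          = Polynomial.taylorAlgHom (a ℓ) ((X - C (a ℓ)) ^ n ℓ) from rfl, map_pow]
      simp [Polynomial.taylor_X, Polynomial.taylor_C]
    rw [htay]
    exact Polynomial.X_pow_dvd_iff.mp (Dvd.intro _ rfl) i hi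
  rw [← heval, hzero]

private lemma charlier_eq (r : ℕ) (a : Fin r → ℂ) (n : Fin r → ℕ) (k : ℕ) :
    charlierAngelesco r a n (k : ℂ) =
      ∑ K ∈ Fintype.piFinset (fun i : Fin r => Finset.range (n i + 1)),
        (∏ t, ((n t).choose (K t) : ℂ) * (-(a t)) ^ (n t - K t)) *
          (k.descFactorial (∑ t, K t) : ℂ) := by
  unfold charlierAngelesco
  refine Finset.sum_congr rfl fun K _ => ?_
  rw [poch_neg_natCast]
  have h : ((-1 : ℂ) ^ (∑ t, K t)) * ((-1 : ℂ) ^ (∑ t, K t)) = 1 := by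
    rw [← pow_add]
    exact Even.neg_one_pow ⟨∑ t, K t, rfl⟩
  rw [mul_assoc, ← mul_assoc ((-1 : ℂ) ^ (∑ t, K t)), h, one_mul]

end Helpers

/-- For nonzero pairwise distinct parameters `a_0, …, a_{r-1}`, the type II
Charlier--Angelesco polynomial satisfies the orthogonality relations
`∑_{k=0}^∞ C^a_n(k) (-k)_j a_ℓ^k / k! = 0` for `0 ≤ j ≤ n_ℓ - 1`, the series converging
absolutely. -/
theorem charlier_angelesco_orthogonality (r : ℕ) (hr : 1 ≤ r) (a : Fin r → ℂ)
    (ha : ∀ i, a i ≠ 0) (hdist : ∀ i j : Fin r, i ≠ j → a i ≠ a j)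
    (n : Fin r → ℕ) (ℓ : Fin r) (j : ℕ) (hj : j < n ℓ) :
    Summable (fun k : ℕ => ‖
      (charlierAngelesco r a n (k : ℂ) * poch (-(k : ℂ)) j *
        (a ℓ ^ k / (k.factorial : ℂ)))‖) ∧
    ∑' k : ℕ, charlierAngelesco r a n (k : ℂ) * poch (-(k : ℂ)) j *
      (a ℓ ^ k / (k.factorial : ℂ)) = 0 := by
  set A := a ℓ with hA
  set Kset := Fintype.piFinset (fun i : Fin r => Finset.range (n i + 1)) with hKset
  set c : (Fin r → ℕ) → ℂ :=
    fun K => ∏ t, ((n t).choose (K t) : ℂ) * (-(a t)) ^ (n t - K t) with hc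
  have hF : ∀ x : ℕ, charlierAngelesco r a n (x : ℂ) * poch (-(x : ℂ)) j *
      (A ^ x / (x.factorial : ℂ))
      = ∑ K ∈ Kset, (c K * (-1) ^ j) *
          ((x.descFactorial (∑ t, K t) : ℂ) * (x.descFactorial j : ℂ) * A ^ x /
            (x.factorial : ℂ)) := by
    intro x
    rw [charlier_eq, poch_neg_natCast, Finset.sum_mul, Finset.sum_mul]
    exact Finset.sum_congr rfl fun K _ => by ring
  have hSnorm : ∀ K ∈ Kset, Summable (fun x : ℕ => ‖(c K * (-1 : ℂ) ^ j) *
      ((x.descFactorial (∑ t, K t) : ℂ) * (x.descFactorial j : ℂ) * A ^ x /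
        (x.factorial : ℂ))‖) := by
    intro K _
    refine ((summable_T_norm A j (∑ t, K t)).mul_left ‖c K * (-1 : ℂ) ^ j‖).congr fun x => ?_
    exact (norm_mul _ _).symm
  have hsum : Summable (fun x : ℕ => ‖charlierAngelesco r a n (x : ℂ) * poch (-(x : ℂ)) j *
      (A ^ x / (x.factorial : ℂ))‖) := by
    refine Summable.of_nonneg_of_le (fun _ => norm_nonneg _) (fun x => ?_) (summable_sum hSnorm)
    rw [hF x]
    exact norm_sum_le _ _
  constructor
  · exact hsum
  · rw [tsum_congr hF, Summable.tsum_finsetSum (fun K _ => (summable_T A j (∑ t, K t)).mul_left (c K * (-1) ^ j))]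
    have h0 : ∀ K ∈ Kset, (∑' x : ℕ, (c K * (-1 : ℂ) ^ j) *
        ((x.descFactorial (∑ t, K t) : ℂ) * (x.descFactorial j : ℂ) * A ^ x /
          (x.factorial : ℂ)))
        = (c K * (-1 : ℂ) ^ j) *
            ∑' x : ℕ, ((x.descFactorial (∑ t, K t) : ℂ) * (x.descFactorial j : ℂ) * A ^ x /
              (x.factorial : ℂ)) := fun K _ => tsum_mul_left
    rw [Finset.sum_congr rfl h0]
    have h1 : ∑ K ∈ Kset, (c K * (-1 : ℂ) ^ j) *
        ∑' x : ℕ, ((x.descFactorial (∑ t, K t) : ℂ) * (x.descFactorial j : ℂ) * A ^ x /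
          (x.factorial : ℂ))
        = ∑ K ∈ Kset, (c K * (-1 : ℂ) ^ j) *
            ∑ i ∈ Finset.range ((∑ t, K t) + 1),
              (((∑ t, K t).choose i : ℂ) * (j.descFactorial i : ℂ) * A ^ j *
                (A ^ ((∑ t, K t) - i) * ∑' s : ℕ, A ^ s / (s.factorial : ℂ))) :=
      Finset.sum_congr rfl fun K _ => by rw [tsum_T]
    rw [h1]
    set E := ∑' s : ℕ, A ^ s / (s.factorial : ℂ) with hE
    set N := (∑ t, n t) + j with hN
    have h2 : ∀ K ∈ Kset, (c K * (-1 : ℂ) ^ j) *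
        ∑ i ∈ Finset.range ((∑ t, K t) + 1),
          (((∑ t, K t).choose i : ℂ) * (j.descFactorial i : ℂ) * A ^ j *
            (A ^ ((∑ t, K t) - i) * E))
        = ∑ i ∈ Finset.range (N + 1), (c K * (-1 : ℂ) ^ j) *
            (((∑ t, K t).choose i : ℂ) * (j.descFactorial i : ℂ) * A ^ j *
              (A ^ ((∑ t, K t) - i) * E)) := by
      intro K hK
      rw [Finset.mul_sum]
      refine Finset.sum_subset ?_ ?_
      · apply Finset.range_subset_range.mpr
        have hKt : ∀ t, K t ≤ n t := fun t =>
          Nat.lt_succ_iff.mp (Finset.mem_range.mp (Fintype.mem_piFinset.mp hK t))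
        have := Finset.sum_le_sum (fun t (_ : t ∈ Finset.univ) => hKt t)
        omega
      · intro i hi hni
        have hlt : (∑ t, K t) < i := by
          simp only [Finset.mem_range] at hi hni
          omega
        rw [Nat.choose_eq_zero_of_lt hlt]
        simp
    rw [Finset.sum_congr rfl h2, Finset.sum_comm]
    refine Finset.sum_eq_zero fun i hi => ?_
    by_cases hij : i ≤ j
    · have hin : i < n ℓ := lt_of_le_of_lt hij hj
      have h3 : ∑ K ∈ Kset, (c K * (-1 : ℂ) ^ j) *
          (((∑ t, K t).choose i : ℂ) * (j.descFactorial i : ℂ) * A ^ j *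
            (A ^ ((∑ t, K t) - i) * E))
          = ((-1 : ℂ) ^ j * (j.descFactorial i : ℂ) * A ^ j * E) *
              ∑ K ∈ Kset, c K * (((∑ t, K t).choose i : ℂ) * A ^ ((∑ t, K t) - i)) := by
        rw [Finset.mul_sum]
        exact Finset.sum_congr rfl fun K _ => by ring
      rw [h3, hasse_sum_zero r a n ℓ i hin, mul_zero]
    · refine Finset.sum_eq_zero fun K _ => ?_
      rw [Nat.descFactorial_eq_zero_iff_lt.mpr (by omega : j < i)]
      simp
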